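/- Let P be a positive logic and L := Int + P, with corresponding varieties V_P (Brouwerian) and V_L (Heyting). For any set R of positive multiple-conclusion rules and any positive multiple-conclusion rule r: r semantically follows from R over V_P (every Brouwerian algebra in V_P validating all rules of R validates r) if and only if r semantically follows from R over V_L (every Heyting algebra in V_L validating all rules of R validates r). -/

import Mathlib

/-- Propositional formulas over ∧, ∨, →, ⊥ and variables. -/
inductive Fml : Type
  | var : ℕ → Fml
  | bot : Fml
  | and : Fml → Fml → Fml
  | or  : Fml → Fml → Fml
  | imp : Fml → Fml → Fml

namespace Fml

/-- A formula is positive if it contains no ⊥. -/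
def Positive : Fml → Prop
  | var _ => True
  | bot => False
  | and A B => A.Positive ∧ B.Positive
  | or A B => A.Positive ∧ B.Positive
  | imp A B => A.Positive ∧ B.Positive

/-- Evaluation in a Brouwerian (generalized Heyting) algebra, with a designated
value `z` interpreting ⊥. -/
def evalB {α : Type} [GeneralizedHeytingAlgebra α] (z : α) (ν : ℕ → α) : Fml → α
  | var n => ν n
  | bot => z
  | and A B => A.evalB z ν ⊓ B.evalB z ν
  | or A B => A.evalB z ν ⊔ B.evalB z ν
  | imp A B => A.evalB z ν ⇨ B.evalB z ν

/-- Evaluation in a Heyting algebra (⊥ interpreted as the least element). -/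
def eval {α : Type} [HeytingAlgebra α] (ν : ℕ → α) (A : Fml) : α := A.evalB ⊥ ν

/-- Evaluation of (positive) formulas in a Brouwerian algebra
(⊥ gets the junk value ⊤; it is irrelevant for positive formulas). -/
def pEval {α : Type} [GeneralizedHeytingAlgebra α] (ν : ℕ → α) (A : Fml) : α := A.evalB ⊤ ν

/-- Substitution. -/
def subst (σ : ℕ → Fml) : Fml → Fml
  | var n => σ n
  | bot => bot
  | and A B => and (A.subst σ) (B.subst σ)
  | or A B => or (A.subst σ) (B.subst σ)
  | imp A B => imp (A.subst σ) (B.subst σ)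

/-- Replacing every occurrence of ⊥ by the formula `C`. -/
def substBot : Fml → Fml → Fml
  | var n, _ => var n
  | bot, C => C
  | and A B, C => and (A.substBot C) (B.substBot C)
  | or A B, C => or (A.substBot C) (B.substBot C)
  | imp A B, C => imp (A.substBot C) (B.substBot C)

/-- The set of variables occurring in a formula. -/
def vars : Fml → Finset ℕ
  | var n => {n}
  | bot => ∅
  | and A B => A.vars ∪ B.vars
  | or A B => A.vars ∪ B.vars
  | imp A B => A.vars ∪ B.vars

end Fml

/-- The set of positive formulas. -/
def PosFml : Set Fml := {A | A.Positive}

/-- A substitution is positive if all its values are positive formulas. -/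
def PosSubst (σ : ℕ → Fml) : Prop := ∀ n, (σ n).Positive

/-- Validity of a formula in a Heyting algebra. -/
def ValidH (α : Type) [HeytingAlgebra α] (A : Fml) : Prop := ∀ ν : ℕ → α, A.eval ν = ⊤

/-- Intuitionistic propositional logic (via algebraic semantics). -/
def IntL : Set Fml := {A | ∀ (α : Type) [HeytingAlgebra α], ValidH α A}

/-- Superintuitionistic logics. -/
structure IsSILogic (L : Set Fml) : Prop where
  int_sub : IntL ⊆ L
  mp : ∀ A B : Fml, Fml.imp A B ∈ L → A ∈ L → B ∈ L
  subst_closed : ∀ A ∈ L, ∀ σ : ℕ → Fml, A.subst σ ∈ L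

/-- The least superintuitionistic logic containing `Γ`. -/
def IntPlus (Γ : Set Fml) : Set Fml := ⋂₀ {L | IsSILogic L ∧ Γ ⊆ L}

/-- The positive fragment of intuitionistic logic. -/
def IntLPos : Set Fml := IntL ∩ PosFml

/-- Positive logics. -/
structure IsPosLogic (P : Set Fml) : Prop where
  pos : P ⊆ PosFml
  int_sub : IntLPos ⊆ P
  mp : ∀ A B : Fml, Fml.imp A B ∈ P → A ∈ P → B ∈ P
  subst_closed : ∀ A ∈ P, ∀ σ : ℕ → Fml, PosSubst σ → A.subst σ ∈ P

/-- The least positive logic containing `Γ`. -/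
def IntPosPlus (Γ : Set Fml) : Set Fml := ⋂₀ {P | IsPosLogic P ∧ Γ ⊆ P}

/-- Homomorphism of Brouwerian algebras (preserves ⊓, ⊔, ⇨, ⊤). -/
def IsBrHom {α β : Type} [GeneralizedHeytingAlgebra α] [GeneralizedHeytingAlgebra β]
    (f : α → β) : Prop :=
  (∀ a b : α, f (a ⊓ b) = f a ⊓ f b) ∧ (∀ a b : α, f (a ⊔ b) = f a ⊔ f b) ∧
  (∀ a b : α, f (a ⇨ b) = f a ⇨ f b) ∧ f ⊤ = ⊤

/-- A Heyting algebra is a model of a set of formulas `T`. -/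
def Models (α : Type) [HeytingAlgebra α] (T : Set Fml) : Prop := ∀ A ∈ T, ValidH α A

/-- The variety (of Heyting algebras) axiomatized by `T` is B-saturated: any Heyting
algebra whose Brouwerian reduct embeds into the reduct of a model of `T` is itself
a model of `T`. -/
def BSaturated (T : Set Fml) : Prop :=
  ∀ (α : Type) (iα : HeytingAlgebra α),
    (∃ (β : Type) (iβ : HeytingAlgebra β), @Models β iβ T ∧
      ∃ f : α → β, Function.Injective f ∧
        @IsBrHom α β iα.toGeneralizedHeytingAlgebra iβ.toGeneralizedHeytingAlgebra f) →
    @Models α iα T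

/-- A subset of a Brouwerian algebra closed under the Brouwerian operations. -/
def BrClosed {α : Type} [GeneralizedHeytingAlgebra α] (S : Set α) : Prop :=
  ⊤ ∈ S ∧ ∀ a ∈ S, ∀ b ∈ S, a ⊓ b ∈ S ∧ a ⊔ b ∈ S ∧ (a ⇨ b) ∈ S

/-- The Brouwerian subalgebra generated by a set. -/
def genBr {α : Type} [GeneralizedHeytingAlgebra α] (s : Set α) : Set α :=
  ⋂₀ {S | BrClosed S ∧ s ⊆ S}

/-- Conjunction of a list of variables (nonempty case is the intended one). -/
def conjList : List ℕ → Fml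
  | [] => Fml.imp (Fml.var 0) (Fml.var 0)
  | [n] => Fml.var n
  | n :: l => Fml.and (Fml.var n) (conjList l)

/-- The conjunction π^∧ of all variables in a finite set π. -/
def conjOf (π : Finset ℕ) : Fml := conjList (π.sort (· ≤ ·))

/-- Multiple-conclusion rules. -/
def MRule : Type := Finset Fml × Finset Fml

/-- A rule is positive if all its premises and conclusions are positive. -/
def PosRule (r : MRule) : Prop := (∀ A ∈ r.1, A.Positive) ∧ (∀ B ∈ r.2, B.Positive)

/-- Validity of a (positive) m-rule in a Brouwerian algebra. -/
def RuleValid (α : Type) [GeneralizedHeytingAlgebra α] (r : MRule) : Prop :=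
  ∀ ν : ℕ → α, (∀ A ∈ r.1, A.pEval ν = ⊤) → ∃ B ∈ r.2, B.pEval ν = ⊤

/-- A Brouwerian algebra is a model of a set of positive formulas. -/
def ModelsP (β : Type) [GeneralizedHeytingAlgebra β] (P : Set Fml) : Prop :=
  ∀ A ∈ P, ∀ ν : ℕ → β, A.pEval ν = ⊤

/-- Filter of a Brouwerian (or Heyting) algebra. -/
def IsFilter' {α : Type} [GeneralizedHeytingAlgebra α] (F : Set α) : Prop :=
  ⊤ ∈ F ∧ ∀ a b : α, a ∈ F → (a ⇨ b) ∈ F → b ∈ F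


section Aux14

open Fml

lemma evalB_positive {α : Type} [GeneralizedHeytingAlgebra α] (z z' : α) (ν : ℕ → α) :
    ∀ A : Fml, A.Positive → A.evalB z ν = A.evalB z' ν := by
  intro A h
  induction A with
  | var n => rfl
  | bot => exact h.elim
  | and A B ihA ihB => simp only [Fml.evalB]; rw [ihA h.1, ihB h.2]
  | or A B ihA ihB => simp only [Fml.evalB]; rw [ihA h.1, ihB h.2]
  | imp A B ihA ihB => simp only [Fml.evalB]; rw [ihA h.1, ihB h.2]

lemma evalB_congr {α : Type} [GeneralizedHeytingAlgebra α] (z : α) {ν ν' : ℕ → α} :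
    ∀ A : Fml, (∀ n ∈ A.vars, ν n = ν' n) → A.evalB z ν = A.evalB z ν' := by
  intro A h
  induction A with
  | var n => exact h n (by simp [Fml.vars])
  | bot => rfl
  | and A B ihA ihB =>
      simp only [Fml.evalB]
      rw [ihA fun n hn => h n (by simp [Fml.vars, hn]),
        ihB fun n hn => h n (by simp [Fml.vars, hn])]
  | or A B ihA ihB =>
      simp only [Fml.evalB]
      rw [ihA fun n hn => h n (by simp [Fml.vars, hn]),
        ihB fun n hn => h n (by simp [Fml.vars, hn])]
  | imp A B ihA ihB =>
      simp only [Fml.evalB]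
      rw [ihA fun n hn => h n (by simp [Fml.vars, hn]),
        ihB fun n hn => h n (by simp [Fml.vars, hn])]

lemma evalB_subst {α : Type} [GeneralizedHeytingAlgebra α] (z : α) (σ : ℕ → Fml) (ν : ℕ → α) :
    ∀ A : Fml, (A.subst σ).evalB z ν = A.evalB z (fun n => (σ n).evalB z ν) := by
  intro A
  induction A with
  | var n => rfl
  | bot => rfl
  | and A B ihA ihB => simp only [Fml.subst, Fml.evalB]; rw [ihA, ihB]
  | or A B ihA ihB => simp only [Fml.subst, Fml.evalB]; rw [ihA, ihB]
  | imp A B ihA ihB => simp only [Fml.subst, Fml.evalB]; rw [ihA, ihB]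

lemma hom_evalB {γ β : Type} [GeneralizedHeytingAlgebra γ] [GeneralizedHeytingAlgebra β]
    (f : γ → β) (hinf : ∀ a b, f (a ⊓ b) = f a ⊓ f b) (hsup : ∀ a b, f (a ⊔ b) = f a ⊔ f b)
    (himp : ∀ a b, f (a ⇨ b) = f a ⇨ f b) (z : γ) (μ : ℕ → γ) :
    ∀ A : Fml, f (A.evalB z μ) = A.evalB (f z) (fun n => f (μ n)) := by
  intro A
  induction A with
  | var n => rfl
  | bot => rfl
  | and A B ihA ihB => simp only [Fml.evalB]; rw [hinf, ihA, ihB]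
  | or A B ihA ihB => simp only [Fml.evalB]; rw [hsup, ihA, ihB]
  | imp A B ihA ihB => simp only [Fml.evalB]; rw [himp, ihA, ihB]

lemma brClosed_genBr {β : Type} [GeneralizedHeytingAlgebra β] (s : Set β) :
    BrClosed (genBr s) := by
  constructor
  · intro S hS; exact hS.1.1
  · intro a ha b hb
    refine ⟨fun S hS => ?_, fun S hS => ?_, fun S hS => ?_⟩
    · exact (hS.1.2 a (ha S hS) b (hb S hS)).1
    · exact (hS.1.2 a (ha S hS) b (hb S hS)).2.1
    · exact (hS.1.2 a (ha S hS) b (hb S hS)).2.2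

lemma subset_genBr {β : Type} [GeneralizedHeytingAlgebra β] (s : Set β) : s ⊆ genBr s := by
  intro x hx S hS; exact hS.2 hx

lemma finsetInf_mem {β : Type} [GeneralizedHeytingAlgebra β] {S : Set β} (hS : BrClosed S)
    (V : Finset ℕ) (ν : ℕ → β) (h : ∀ n ∈ V, ν n ∈ S) : V.inf ν ∈ S := by
  classical
  induction V using Finset.induction with
  | empty => simpa using hS.1
  | @insert a V ha ih =>
      rw [Finset.inf_insert]
      exact (hS.2 _ (h a (Finset.mem_insert_self a V)) _
        (ih fun n hn => h n (Finset.mem_insert_of_mem hn))).1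

lemma genBr_ge {β : Type} [GeneralizedHeytingAlgebra β] (V : Finset ℕ) (ν : ℕ → β) :
    ∀ x ∈ genBr (ν '' ↑V), V.inf ν ≤ x := by
  intro x hx
  have key : x ∈ {y | y ∈ genBr (ν '' ↑V) ∧ V.inf ν ≤ y} := by
    apply hx
    constructor
    · constructor
      · exact ⟨(brClosed_genBr _).1, le_top⟩
      · intro a ha b hb
        obtain ⟨h1, h2, h3⟩ := (brClosed_genBr (ν '' ↑V)).2 a ha.1 b hb.1
        exact ⟨⟨h1, le_inf ha.2 hb.2⟩, ⟨h2, le_trans ha.2 le_sup_left⟩,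
          ⟨h3, le_trans hb.2 le_himp⟩⟩
    · rintro y ⟨n, hn, rfl⟩
      exact ⟨subset_genBr _ ⟨n, hn, rfl⟩, Finset.inf_le (by simpa using hn)⟩
  exact key.2

lemma pEval_congr {α : Type} [GeneralizedHeytingAlgebra α] {ν ν' : ℕ → α} (A : Fml)
    (h : ∀ n ∈ A.vars, ν n = ν' n) : A.pEval ν = A.pEval ν' :=
  evalB_congr ⊤ A h

/-- The Brouwerian subalgebra generated by `s`, as a type. -/
abbrev GenAlg {β : Type} [GeneralizedHeytingAlgebra β] (s : Set β) : Type :=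
  {x : β // x ∈ genBr s}

namespace GenAlg

variable {β : Type} [GeneralizedHeytingAlgebra β] {s : Set β}

instance : Min (GenAlg s) :=
  ⟨fun a b => ⟨a.1 ⊓ b.1, ((brClosed_genBr s).2 _ a.2 _ b.2).1⟩⟩

instance : Max (GenAlg s) :=
  ⟨fun a b => ⟨a.1 ⊔ b.1, ((brClosed_genBr s).2 _ a.2 _ b.2).2.1⟩⟩

instance : HImp (GenAlg s) :=
  ⟨fun a b => ⟨a.1 ⇨ b.1, ((brClosed_genBr s).2 _ a.2 _ b.2).2.2⟩⟩

instance : Top (GenAlg s) := ⟨⟨⊤, (brClosed_genBr s).1⟩⟩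

instance : GeneralizedHeytingAlgebra (GenAlg s) :=
  Subtype.val_injective.generalizedHeytingAlgebra Subtype.val
    Iff.rfl Iff.rfl (fun _ _ => rfl) (fun _ _ => rfl) rfl (fun _ _ => rfl)

end GenAlg

end Aux14

/-- for positive m-rules, semantic consequence over the variety of
Brouwerian algebras of P coincides with semantic consequence over the variety of
Heyting algebras of L = Int + P. -/
theorem stmt14 (P : Set Fml) (hP : IsPosLogic P) (R : Set MRule)
    (hR : ∀ r ∈ R, PosRule r) (r : MRule) (hr : PosRule r) :
    (∀ (β : Type) [GeneralizedHeytingAlgebra β], ModelsP β P →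
        (∀ s ∈ R, RuleValid β s) → RuleValid β r) ↔
    (∀ (α : Type) [HeytingAlgebra α], Models α (IntPlus P) →
        (∀ s ∈ R, RuleValid α s) → RuleValid α r) := by
  constructor
  · -- Heyting consequence from Brouwerian consequence
    intro h α _ hMod hRules
    refine h α ?_ hRules
    intro A hA ν
    have hpos : A.Positive := hP.pos hA
    have hAL : A ∈ IntPlus P := fun L hL => hL.2 hA
    have := hMod A hAL ν
    unfold Fml.eval at this
    unfold Fml.pEval
    rw [evalB_positive ⊤ ⊥ ν A hpos]
    exact this
  · -- Brouwerian consequence from Heyting consequence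
    intro h β _ hMod hRules ν hprem
    classical
    set V : Finset ℕ := (r.1 ∪ r.2).sup Fml.vars with hVdef
    set s : Set β := ν '' ↑V with hsdef
    have hmem : V.inf ν ∈ genBr s :=
      finsetInf_mem (brClosed_genBr s) V ν
        (fun n hn => subset_genBr s ⟨n, Finset.mem_coe.2 hn, rfl⟩)
    letI instH : HeytingAlgebra (GenAlg s) :=
      { (inferInstance : GeneralizedHeytingAlgebra (GenAlg s)) with
        bot := ⟨V.inf ν, hmem⟩
        compl := fun a => a ⇨ ⟨V.inf ν, hmem⟩
        bot_le := fun a => genBr_ge V ν a.1 a.2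
        himp_bot := fun _ => rfl }
    have hinf : ∀ a b : GenAlg s, (a ⊓ b).1 = a.1 ⊓ b.1 := fun _ _ => rfl
    have hsup : ∀ a b : GenAlg s, (a ⊔ b).1 = a.1 ⊔ b.1 := fun _ _ => rfl
    have himp' : ∀ a b : GenAlg s, (a ⇨ b).1 = a.1 ⇨ b.1 := fun _ _ => rfl
    have htop : (⊤ : GenAlg s).1 = (⊤ : β) := rfl
    have hval : ∀ (A : Fml) (μ : ℕ → GenAlg s),
        (A.pEval μ).1 = A.pEval (fun n => (μ n).1) := by
      intro A μ
      have := hom_evalB (Subtype.val : GenAlg s → β) hinf hsup himp' ⊤ μ A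
      unfold Fml.pEval
      rw [htop] at this
      exact this
    -- the subalgebra is a Heyting model of IntPlus P
    have hModels : Models (GenAlg s) (IntPlus P) := by
      have hsub : IntPlus P ⊆ {A | ValidH (GenAlg s) A} := by
        apply Set.sInter_subset_of_mem
        refine ⟨⟨?_, ?_, ?_⟩, ?_⟩
        · intro A hA
          exact hA (GenAlg s)
        · intro A B hAB hA ν0
          have h1 : A.eval ν0 ⇨ B.eval ν0 = ⊤ := hAB ν0
          have h2 : A.eval ν0 = ⊤ := hA ν0
          rwa [h2, top_himp] at h1
        · intro A hA σ ν0
          show (A.subst σ).evalB ⊥ ν0 = ⊤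
          rw [evalB_subst]
          exact hA _
        · intro A hA ν0
          apply Subtype.ext
          have h1 : A.eval ν0 = A.pEval ν0 := evalB_positive ⊥ ⊤ ν0 A (hP.pos hA)
          rw [h1, hval A ν0]
          exact hMod A hA _
      intro A hA
      exact hsub hA
    -- rules of R are valid in the subalgebra
    have hRulesG : ∀ t ∈ R, RuleValid (GenAlg s) t := by
      intro t ht μ' hpre
      have hpre' : ∀ A ∈ t.1, A.pEval (fun n => (μ' n).1) = ⊤ := by
        intro A hA
        rw [← hval, hpre A hA]
        exact htop
      obtain ⟨B, hB, hBt⟩ := hRules t ht _ hpre'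
      refine ⟨B, hB, Subtype.ext ?_⟩
      rw [hval]
      exact hBt
    -- valuation into the subalgebra
    set μ : ℕ → GenAlg s := fun n =>
      if hn : n ∈ V then ⟨ν n, subset_genBr s ⟨n, Finset.mem_coe.2 hn, rfl⟩⟩ else ⊤ with hμdef
    have hagree : ∀ A : Fml, A ∈ r.1 ∪ r.2 → ∀ n ∈ A.vars, (μ n).1 = ν n := by
      intro A hA n hn
      have hnV : n ∈ V := by
        have hle : A.vars ≤ V := Finset.le_sup (f := Fml.vars) hA
        exact hle hn
      simp only [hμdef]
      rw [dif_pos hnV]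
    have hpreμ : ∀ A ∈ r.1, A.pEval μ = ⊤ := by
      intro A hA
      apply Subtype.ext
      calc (A.pEval μ).1 = A.pEval (fun n => (μ n).1) := hval A μ
        _ = A.pEval ν := pEval_congr A (hagree A (Finset.mem_union_left _ hA))
        _ = ⊤ := hprem A hA
    obtain ⟨B, hB, hBt⟩ := h (GenAlg s) hModels hRulesG μ hpreμ
    refine ⟨B, hB, ?_⟩
    calc B.pEval ν = B.pEval (fun n => (μ n).1) :=
          (pEval_congr B (hagree B (Finset.mem_union_right _ hB))).symm
      _ = (B.pEval μ).1 := (hval B μ).symm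
      _ = ⊤ := by rw [hBt]; exact htop
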